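/- Let r = b/(1+2b) with b > 0, and suppose zₙ → ∞ with zₙ = o(n^r). Then ∫₀^{zₙ} (1 - v^{1/r}/(8n))^{2n} dv → 4^r · r · Γ(r) as n → ∞. -/

import Mathlib

open Filter Topology MeasureTheory Set


/-- With `r = b/(1+2b)`, `zₙ → ∞` and `zₙ = o(n^r)`, the integrals
`∫₀^{zₙ} (1 - v^(1/r)/(8n))^(2n) dv` converge to `4^r · r · Γ(r)`. -/
theorem integral_tendsto_gamma (b : ℝ) (hb : 0 < b) (r : ℝ) (hr : r = b / (1 + 2 * b))
    (z : ℕ → ℝ) (hz : Tendsto z atTop atTop)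
    (hzo : Tendsto (fun n : ℕ => z n / (n : ℝ) ^ r) atTop (nhds 0)) :
    Tendsto (fun n : ℕ => ∫ v in (0 : ℝ)..(z n), (1 - v ^ (1 / r) / (8 * n)) ^ (2 * n))
      atTop (nhds (4 ^ r * r * Real.Gamma r)) := by
  have hr0 : 0 < r := by rw [hr]; positivity
  have hrinv : 1 ≤ 1 / r := by
    rw [hr, one_div_div, le_div_iff₀ hb]; linarith
  set μ := volume.restrict (Set.Ioi (0:ℝ)) with hμ
  set bnd : ℝ → ℝ := fun v => Real.exp (-(1/4) * v ^ (1/r)) with hbnd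
  set F : ℕ → ℝ → ℝ := fun n =>
    (Set.Ioc (0:ℝ) (z n)).indicator (fun v => (1 - v ^ (1/r) / (8*n)) ^ (2*n)) with hF
  have hbound_int : Integrable bnd μ := by
    have h := integrableOn_rpow_mul_exp_neg_mul_rpow (neg_one_lt_zero) (lt_of_lt_of_le one_pos hrinv)
      (by norm_num : (0:ℝ) < 1/4)
    exact h.congr_fun (fun x hx => by
      beta_reduce; rw [Real.rpow_zero, one_mul]) measurableSet_Ioi
  have hval : ∫ v, bnd v ∂μ = 4 ^ r * r * Real.Gamma r := by
    rw [hμ, hbnd]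
    rw [integral_exp_neg_mul_rpow (by positivity) (by norm_num)]
    rw [one_div_one_div, Real.Gamma_add_one hr0.ne']
    have h4 : ((1:ℝ)/4) ^ (-1 / (1/r)) = 4 ^ r := by
      rw [neg_div, one_div_one_div, Real.rpow_neg (by norm_num), one_div,
        Real.inv_rpow (by norm_num), inv_inv]
    rw [h4]; ring
  rw [← hval]
  have h2n : Tendsto (fun n : ℕ => 2 * n) atTop atTop :=
    StrictMono.tendsto_atTop (fun a b h => by omega)
  have key : Tendsto (fun n => ∫ v, F n v ∂μ) atTop (𝓝 (∫ v, bnd v ∂μ)) := by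
    apply tendsto_integral_filter_of_dominated_convergence bnd
    · filter_upwards with n
      apply AEStronglyMeasurable.indicator _ measurableSet_Ioc
      exact (Measurable.aestronglyMeasurable (by measurability))
    · have h1 : ∀ᶠ n : ℕ in atTop, z n / (n:ℝ) ^ r < 1 :=
        hzo.eventually_lt_const (by norm_num : (0:ℝ) < 1)
      filter_upwards [h1, eventually_ge_atTop 1] with n hn1 hn1'
      apply Filter.Eventually.of_forall
      intro v
      by_cases hv : v ∈ Set.Ioc (0:ℝ) (z n)
      · rw [hF]
        simp only [Set.indicator_of_mem hv]
        have hnpos : (0:ℝ) < n := by exact_mod_cast hn1'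
        have hvr0 : 0 ≤ v ^ (1/r) := Real.rpow_nonneg hv.1.le _
        have hzn : z n ≤ (n:ℝ)^r := le_of_lt ((div_lt_one (by positivity)).mp hn1)
        have hvle : v ^ (1/r) ≤ (n:ℝ) := by
          calc v^(1/r) ≤ ((n:ℝ)^r)^(1/r) :=
                Real.rpow_le_rpow hv.1.le (hv.2.trans hzn) (by positivity)
          _ = (n:ℝ) := by
                rw [← Real.rpow_mul (Nat.cast_nonneg n), mul_one_div_cancel hr0.ne',
                  Real.rpow_one]
        set x := v ^ (1/r) / (8*(n:ℝ)) with hx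
        have hx0 : 0 ≤ x := by positivity
        have hx1 : x ≤ 1 := by rw [hx, div_le_one (by positivity)]; linarith
        have h1x : 0 ≤ 1 - x := by linarith
        rw [Real.norm_eq_abs, abs_of_nonneg (pow_nonneg h1x _)]
        calc (1-x)^(2*n) ≤ (Real.exp (-x))^(2*n) :=
              pow_le_pow_left₀ h1x (by linarith [Real.add_one_le_exp (-x)]) _
        _ = Real.exp (((2*n : ℕ):ℝ) * (-x)) := (Real.exp_nat_mul _ _).symm
        _ = bnd v := by
              rw [hbnd]
              congr 1
              rw [hx]
              push_cast
              field_simp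
              ring
      · rw [hF]
        simp only [Set.indicator_of_notMem hv]
        rw [norm_zero]
        exact (Real.exp_pos _).le
    · exact hbound_int
    · filter_upwards [ae_restrict_mem measurableSet_Ioi] with v hv
      have hv0 : (0:ℝ) < v := hv
      have main : Tendsto (fun n : ℕ => (1 + (-(1/4) * v^(1/r))/((2*n : ℕ):ℝ)) ^ (2*n))
          atTop (𝓝 (Real.exp (-(1/4) * v^(1/r)))) :=
        (Real.tendsto_one_add_div_pow_exp _).comp h2n
      refine main.congr' ?_
      filter_upwards [hz.eventually_ge_atTop v, eventually_ge_atTop 1] with n h1 h2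
      rw [hF]
      simp only [Set.indicator_of_mem (Set.mem_Ioc.mpr ⟨hv0, h1⟩)]
      congr 1
      have hn0 : (n:ℝ) ≠ 0 := by positivity
      push_cast
      field_simp
      ring
  refine key.congr' ?_
  filter_upwards [hz.eventually_ge_atTop 0] with n hn
  rw [intervalIntegral.integral_of_le hn, hF]
  simp only []
  rw [hμ, MeasureTheory.integral_indicator measurableSet_Ioc,
    Measure.restrict_restrict measurableSet_Ioc,
    Set.inter_eq_left.mpr Set.Ioc_subset_Ioi_self]
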